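/- The six-dimensional integral ∫_{[0,1]³} ∫_{[0,1]³} ‖x − y‖^{-1} dx dy over the unit cube equals the three-dimensional integral ∫_{[−1,1]³} (1 − |r₁|)(1 − |r₂|)(1 − |r₃|) / ‖r‖ dr, where r = (r₁, r₂, r₃). -/

import Mathlib

open MeasureTheory Real
open scoped ENNReal

/-- The unit cube `[0,1]³` in Euclidean `ℝ³`. -/
def unitCube : Set (EuclideanSpace ℝ (Fin 3)) := {x | ∀ i, x i ∈ Set.Icc (0 : ℝ) 1}

/-- The box `[-1,1]³` in Euclidean `ℝ³`. -/
def symBox : Set (EuclideanSpace ℝ (Fin 3)) := {r | ∀ i, r i ∈ Set.Icc (-1 : ℝ) 1}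

section Aux

open Set Metric

local notation "E3" => EuclideanSpace ℝ (Fin 3)

private lemma measurable_eval3 (i : Fin 3) : Measurable fun x : E3 => x i :=
  (EuclideanSpace.proj i).continuous.measurable

private lemma measurableSet_box (a b : Fin 3 → ℝ) :
    MeasurableSet {x : E3 | ∀ i, x i ∈ Icc (a i) (b i)} := by
  have : {x : E3 | ∀ i, x i ∈ Icc (a i) (b i)} = ⋂ i, (fun x : E3 => x i) ⁻¹' Icc (a i) (b i) := by
    ext x; simp
  rw [this]
  exact MeasurableSet.iInter fun i => (measurable_eval3 i) measurableSet_Icc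

private lemma measurableSet_unitCube : MeasurableSet unitCube :=
  measurableSet_box (fun _ => 0) (fun _ => 1)

private lemma measurableSet_symBox : MeasurableSet symBox :=
  measurableSet_box (fun _ => -1) (fun _ => 1)

private lemma volume_box (a b : Fin 3 → ℝ) :
    volume {x : E3 | ∀ i, x i ∈ Icc (a i) (b i)} = ∏ i, ENNReal.ofReal (b i - a i) := by
  have h := (EuclideanSpace.volume_preserving_symm_measurableEquiv_toLp (Fin 3)).measure_preimage
    (s := Set.pi Set.univ fun i => Icc (a i) (b i))
    (MeasurableSet.univ_pi fun i => measurableSet_Icc).nullMeasurableSet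
  have heq : {x : E3 | ∀ i, x i ∈ Icc (a i) (b i)}
      = (MeasurableEquiv.toLp 2 (Fin 3 → ℝ)).symm ⁻¹' Set.pi Set.univ fun i => Icc (a i) (b i) := by
    ext x; simp only [Set.mem_preimage, Set.mem_univ_pi, Set.mem_setOf_eq]; rfl
  rw [heq, h, volume_pi_pi]
  simp [Real.volume_Icc]

private lemma abs_apply_le (x : E3) (i : Fin 3) : |x i| ≤ ‖x‖ := by
  rw [EuclideanSpace.norm_eq, ← Real.sqrt_sq_eq_abs]
  apply Real.sqrt_le_sqrt
  simp_rw [Real.norm_eq_abs, sq_abs]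
  exact Finset.single_le_sum (f := fun j => x j ^ 2) (fun j _ => sq_nonneg _) (Finset.mem_univ i)

private lemma key_bound (x : E3) (hx0 : ∀ i, x i ≠ 0) :
    ‖x‖⁻¹ ≤ ∏ i, |x i| ^ (-(1/3) : ℝ) := by
  have hxpos : (0:ℝ) < ∏ i, |x i| := Finset.prod_pos fun i _ => abs_pos.2 (hx0 i)
  have hnpos : (0:ℝ) < ‖x‖ := norm_pos_iff.2 fun h => hx0 0 (by rw [h]; rfl)
  have hprod : ∏ i, |x i| ≤ ‖x‖ ^ (3:ℕ) :=
    calc ∏ i, |x i| ≤ ∏ _i : Fin 3, ‖x‖ :=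
          Finset.prod_le_prod (fun i _ => abs_nonneg _) (fun i _ => abs_apply_le x i)
      _ = ‖x‖ ^ (3:ℕ) := by simp [Finset.prod_const]
  calc ‖x‖⁻¹ = (‖x‖ ^ (3:ℕ)) ^ (-(1/3) : ℝ) := by
        rw [← Real.rpow_natCast _ 3, ← Real.rpow_mul hnpos.le]
        norm_num
        rw [Real.rpow_neg_one]
    _ ≤ (∏ i, |x i|) ^ (-(1/3) : ℝ) :=
        Real.rpow_le_rpow_of_nonpos hxpos hprod (by norm_num)
    _ = ∏ i, |x i| ^ (-(1/3) : ℝ) := by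
        rw [← Real.finset_prod_rpow _ _ (fun i _ => abs_nonneg _)]

private lemma int1D : IntegrableOn (fun t : ℝ => |t| ^ (-(1/3) : ℝ)) (Icc (-2) 2) := by
  have hpos : IntegrableOn (fun t : ℝ => |t| ^ (-(1/3) : ℝ)) (Icc 0 2) := by
    have h := (intervalIntegral.intervalIntegrable_rpow' (r := -(1/3)) (by norm_num)
      (a := 0) (b := 2))
    rw [intervalIntegrable_iff_integrableOn_Icc_of_le (by norm_num)] at h
    exact h.congr_fun (fun t ht => by rw [abs_of_nonneg ht.1]) measurableSet_Icc
  have hneg : IntegrableOn (fun t : ℝ => |t| ^ (-(1/3) : ℝ)) (Icc (-2) 0) := by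
    have hm : MeasurePreserving (fun t : ℝ => -t) volume volume :=
      Measure.measurePreserving_neg volume
    have h2 := (hm.integrableOn_comp_preimage (MeasurableEquiv.neg ℝ).measurableEmbedding).2 hpos
    have heq : (fun t : ℝ => -t) ⁻¹' Icc 0 2 = Icc (-2) 0 := by
      ext t
      simp only [Set.mem_preimage, Set.mem_Icc]
      constructor <;> (intro h; constructor <;> linarith [h.1, h.2])
    rw [heq] at h2
    exact h2.congr_fun (fun t _ => by simp [abs_neg]) measurableSet_Icc
  exact (hneg.union hpos).mono_set (fun t ht => by
    rcases le_total t 0 with h | h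
    · exact Or.inl ⟨ht.1, h⟩
    · exact Or.inr ⟨h, ht.2⟩)

private lemma intBall : IntegrableOn (fun x : E3 => ‖x‖⁻¹) (ball 0 2) := by
  set h : ℝ → ℝ := (Icc (-2:ℝ) 2).indicator (fun t => |t| ^ (-(1/3) : ℝ)) with hh
  have hInt : Integrable (fun x : Fin 3 → ℝ => ∏ i, h (x i)) :=
    Integrable.fintype_prod (fun _ => int1D.integrable_indicator measurableSet_Icc)
  have hIntE : Integrable (fun x : E3 => ∏ i, h (x i)) :=
    ((EuclideanSpace.volume_preserving_symm_measurableEquiv_toLp (Fin 3)).integrable_comp_emb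
      ((MeasurableEquiv.toLp 2 (Fin 3 → ℝ)).symm).measurableEmbedding).2 hInt
  refine Integrable.mono hIntE.integrableOn (measurable_norm.inv).aestronglyMeasurable ?_
  have hnull : ∀ᵐ x : E3, ∀ i, x i ≠ 0 := by
    rw [ae_all_iff]
    intro i
    have hset : volume {x : E3 | x i = 0} = 0 := by
      have h0 := (EuclideanSpace.volume_preserving_symm_measurableEquiv_toLp (Fin 3)).measure_preimage
        (s := {f : Fin 3 → ℝ | f i = 0})
        ((measurableSet_singleton (0:ℝ)).preimage (measurable_pi_apply i)).nullMeasurableSet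
      have heq : {x : E3 | x i = 0}
          = (MeasurableEquiv.toLp 2 (Fin 3 → ℝ)).symm ⁻¹' {f | f i = 0} := rfl
      rw [heq, h0, MeasureTheory.volume_pi, Measure.pi_hyperplane]
    exact compl_mem_ae_iff.2 hset
  filter_upwards [ae_restrict_mem measurableSet_ball, ae_restrict_of_ae hnull] with x hxb hx0
  have hxlt : ‖x‖ < 2 := by simpa [dist_eq_norm] using hxb
  have hmem : ∀ i, x i ∈ Icc (-2:ℝ) 2 := fun i => by
    have := abs_apply_le x i
    constructor <;> [linarith [neg_abs_le (x i)]; linarith [le_abs_self (x i)]]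
  have hval : ∏ i, h (x i) = ∏ i, |x i| ^ (-(1/3) : ℝ) :=
    Finset.prod_congr rfl fun i _ => by rw [hh, Set.indicator_of_mem (hmem i)]
  rw [Real.norm_eq_abs, Real.norm_eq_abs, abs_of_nonneg (inv_nonneg.2 (norm_nonneg x)),
    abs_of_nonneg (by rw [hval]; positivity)]
  rw [hval]
  exact key_bound x hx0

private lemma minmax (t : ℝ) : min 1 (1 + t) - max 0 t = 1 - |t| := by
  rcases le_total 0 t with h | h
  · rw [abs_of_nonneg h, max_eq_right h, min_eq_left (by linarith)]
  · rw [abs_of_nonpos h, max_eq_left h, min_eq_right (by linarith)]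
    ring

/-- The overlap volume. -/
private lemma overlap_volume (r : E3) :
    volume (unitCube ∩ {x : E3 | x - r ∈ unitCube})
      = ∏ i, ENNReal.ofReal (1 - |r i|) := by
  have hset : unitCube ∩ {x : E3 | x - r ∈ unitCube}
      = {x : E3 | ∀ i, x i ∈ Icc (max 0 (r i)) (min 1 (1 + r i))} := by
    ext x
    simp only [unitCube, Set.mem_inter_iff, Set.mem_setOf_eq, Set.mem_Icc]
    constructor
    · rintro ⟨h1, h2⟩ i
      have h2i := h2 i
      simp only [PiLp.sub_apply] at h2i
      exact ⟨max_le (h1 i).1 (by linarith [h2i.1]), le_min (h1 i).2 (by linarith [h2i.2])⟩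
    · intro h
      constructor
      · intro i
        exact ⟨le_trans (le_max_left _ _) (h i).1, le_trans (h i).2 (min_le_left _ _)⟩
      · intro i
        simp only [PiLp.sub_apply]
        constructor
        · linarith [le_trans (le_max_right 0 (r i)) (h i).1]
        · linarith [le_trans (h i).2 (min_le_right 1 (1 + r i))]
  rw [hset, volume_box]
  exact Finset.prod_congr rfl fun i _ => by rw [minmax]

/-- Change of variables in the inner integral. -/
private lemma inner_cov (x : E3) :
    (∫⁻ y in unitCube, ENNReal.ofReal ‖x - y‖⁻¹)
      = ∫⁻ r, unitCube.indicator (fun _ => (1:ℝ≥0∞)) (x - r) * ENNReal.ofReal ‖r‖⁻¹ := by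
  have hFmeas : Measurable (unitCube.indicator fun y : E3 => ENNReal.ofReal ‖x - y‖⁻¹) :=
    Measurable.indicator (((measurable_const.sub measurable_id).norm.inv).ennreal_ofReal)
      measurableSet_unitCube
  calc (∫⁻ y in unitCube, ENNReal.ofReal ‖x - y‖⁻¹)
      = ∫⁻ y, unitCube.indicator (fun y => ENNReal.ofReal ‖x - y‖⁻¹) y :=
        (lintegral_indicator measurableSet_unitCube _).symm
    _ = ∫⁻ r, unitCube.indicator (fun y => ENNReal.ofReal ‖x - y‖⁻¹) (x - r) :=
        ((Measure.measurePreserving_sub_left volume x).lintegral_comp hFmeas).symm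
    _ = ∫⁻ r, unitCube.indicator (fun _ => (1:ℝ≥0∞)) (x - r) * ENNReal.ofReal ‖r‖⁻¹ := by
        apply lintegral_congr
        intro r
        by_cases hm : x - r ∈ unitCube
        · simp [Set.indicator_of_mem hm, sub_sub_cancel]
        · simp [Set.indicator_of_notMem hm]

private lemma norm_sub_lt (x z : E3) (hx : x ∈ unitCube) (hz : z ∈ unitCube) :
    ‖x - z‖ < 2 := by
  have h : ‖x - z‖ ≤ Real.sqrt 3 := by
    rw [EuclideanSpace.norm_eq]
    apply Real.sqrt_le_sqrt
    have hb : ∀ i : Fin 3, ‖(x - z) i‖ ^ 2 ≤ 1 := by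
      intro i
      rw [Real.norm_eq_abs, sq_abs, PiLp.sub_apply]
      have h1 := hx i; have h2 := hz i
      simp only [Set.mem_Icc] at h1 h2
      nlinarith [h1.1, h1.2, h2.1, h2.2]
    calc ∑ i, ‖(x - z) i‖ ^ 2 ≤ ∑ _i : Fin 3, (1:ℝ) :=
          Finset.sum_le_sum fun i _ => hb i
      _ = 3 := by norm_num
  have : Real.sqrt 3 < 2 := by
    rw [show (2:ℝ) = Real.sqrt 4 by rw [show (4:ℝ) = 2^2 by norm_num, Real.sqrt_sq (by norm_num)]]
    exact Real.sqrt_lt_sqrt (by norm_num) (by norm_num)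
  linarith

theorem stmt_19 :
    ∫ x in unitCube, ∫ y in unitCube, ‖x - y‖⁻¹
      = ∫ r in symBox, (1 - |r 0|) * (1 - |r 1|) * (1 - |r 2|) / ‖r‖ := by
  classical
  set L : E3 → ℝ≥0∞ := fun x => ∫⁻ y in unitCube, ENNReal.ofReal ‖x - y‖⁻¹ with hL
  -- measurability of L
  have hsub_meas : Measurable fun p : E3 × E3 => ENNReal.ofReal ‖p.1 - p.2‖⁻¹ :=
    ((measurable_fst.sub measurable_snd).norm.inv).ennreal_ofReal
  have hL_meas : Measurable L :=
    Measurable.lintegral_prod_right (f := fun x y => ENNReal.ofReal ‖x - y‖⁻¹) hsub_meas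
  -- finiteness of L on the cube
  have hM : (∫⁻ r in Metric.ball (0:E3) 2, ENNReal.ofReal ‖r‖⁻¹) < ⊤ :=
    intBall.lintegral_lt_top
  have hL_fin : ∀ x ∈ unitCube, L x < ⊤ := by
    intro x hx
    rw [hL]
    calc (∫⁻ y in unitCube, ENNReal.ofReal ‖x - y‖⁻¹)
        = ∫⁻ r, unitCube.indicator (fun _ => (1:ℝ≥0∞)) (x - r) * ENNReal.ofReal ‖r‖⁻¹ :=
          inner_cov x
      _ ≤ ∫⁻ r, (Metric.ball (0:E3) 2).indicator (fun r => ENNReal.ofReal ‖r‖⁻¹) r := by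
          apply lintegral_mono
          intro r
          by_cases hm : x - r ∈ unitCube
          · have hrball : r ∈ Metric.ball (0:E3) 2 := by
              rw [Metric.mem_ball, dist_zero_right]
              have := norm_sub_lt x (x - r) hx hm
              rwa [sub_sub_cancel] at this
            simp [Set.indicator_of_mem hm, Set.indicator_of_mem hrball]
          · simp [Set.indicator_of_notMem hm]
      _ = ∫⁻ r in Metric.ball (0:E3) 2, ENNReal.ofReal ‖r‖⁻¹ :=
          lintegral_indicator measurableSet_ball _
      _ < ⊤ := hM
  -- Step 1: LHS as a lintegral
  have step1 : ∫ x in unitCube, ∫ y in unitCube, ‖x - y‖⁻¹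
      = (∫⁻ x in unitCube, L x).toReal := by
    have hinner : ∀ x : E3, (∫ y in unitCube, ‖x - y‖⁻¹) = (L x).toReal := by
      intro x
      rw [hL]
      exact integral_eq_lintegral_of_nonneg_ae (ae_of_all _ fun y => inv_nonneg.2 (norm_nonneg _))
        ((measurable_const.sub measurable_id).norm.inv).aestronglyMeasurable
    rw [show (∫ x in unitCube, ∫ y in unitCube, ‖x - y‖⁻¹)
        = ∫ x in unitCube, (L x).toReal from integral_congr_ae (ae_of_all _ hinner)]
    rw [integral_eq_lintegral_of_nonneg_ae (ae_of_all _ fun x => ENNReal.toReal_nonneg)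
      (hL_meas.ennreal_toReal).aestronglyMeasurable]
    congr 1
    refine setLIntegral_congr_fun measurableSet_unitCube (fun x hx => ?_)
    exact ENNReal.ofReal_toReal (hL_fin x hx).ne
  -- Step 2: Fubini/Tonelli and change of variables
  have step2 : (∫⁻ x in unitCube, L x)
      = ∫⁻ r : E3, (∏ i, ENNReal.ofReal (1 - |r i|)) * ENNReal.ofReal ‖r‖⁻¹ := by
    have h1 : (∫⁻ x in unitCube, L x)
        = ∫⁻ x in unitCube, ∫⁻ r,
            unitCube.indicator (fun _ => (1:ℝ≥0∞)) (x - r) * ENNReal.ofReal ‖r‖⁻¹ :=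
      lintegral_congr fun x => inner_cov x
    have hunc : AEMeasurable
        (Function.uncurry fun (x r : E3) =>
          unitCube.indicator (fun _ => (1:ℝ≥0∞)) (x - r) * ENNReal.ofReal ‖r‖⁻¹)
        ((volume.restrict unitCube).prod volume) := by
      apply Measurable.aemeasurable
      exact Measurable.mul
        ((measurable_const.indicator measurableSet_unitCube).comp
          (measurable_fst.sub measurable_snd))
        ((measurable_snd.norm.inv).ennreal_ofReal)
    rw [h1, lintegral_lintegral_swap hunc]
    apply lintegral_congr
    intro r
    rw [lintegral_mul_const' _ _ ENNReal.ofReal_ne_top]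
    congr 1
    have hsetm : MeasurableSet {x : E3 | x - r ∈ unitCube} :=
      (measurable_id'.sub measurable_const) measurableSet_unitCube
    have hind : ∀ x : E3, unitCube.indicator (fun _ => (1:ℝ≥0∞)) (x - r)
        = ({x : E3 | x - r ∈ unitCube}).indicator (fun _ => (1:ℝ≥0∞)) x := by
      intro x
      simp only [Set.indicator_apply, Set.mem_setOf_eq]
    calc (∫⁻ x in unitCube, unitCube.indicator (fun _ => (1:ℝ≥0∞)) (x - r))
        = ∫⁻ x in unitCube, ({x : E3 | x - r ∈ unitCube}).indicator (fun _ => (1:ℝ≥0∞)) x :=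
          lintegral_congr fun x => hind x
      _ = (volume.restrict unitCube) {x : E3 | x - r ∈ unitCube} :=
          lintegral_indicator_one hsetm
      _ = volume (unitCube ∩ {x : E3 | x - r ∈ unitCube}) := by
          rw [Measure.restrict_apply hsetm, Set.inter_comm]
      _ = ∏ i, ENNReal.ofReal (1 - |r i|) := overlap_volume r
  -- Step 3: RHS as the same lintegral
  have step3 : ∫ r in symBox, (1 - |r 0|) * (1 - |r 1|) * (1 - |r 2|) / ‖r‖
      = (∫⁻ r : E3, (∏ i, ENNReal.ofReal (1 - |r i|)) * ENNReal.ofReal ‖r‖⁻¹).toReal := by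
    have hφ_meas : Measurable fun r : E3 => (1 - |r 0|) * (1 - |r 1|) * (1 - |r 2|) / ‖r‖ := by
      apply Measurable.div
      · exact (((measurable_const.sub (measurable_eval3 0).abs).mul
          (measurable_const.sub (measurable_eval3 1).abs)).mul
          (measurable_const.sub (measurable_eval3 2).abs))
      · exact measurable_norm
    have hφ_nonneg : ∀ r ∈ symBox, 0 ≤ (1 - |r 0|) * (1 - |r 1|) * (1 - |r 2|) / ‖r‖ := by
      intro r hr
      have h0 : ∀ i, |r i| ≤ 1 := fun i => abs_le.2 ⟨(hr i).1, (hr i).2⟩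
      have := h0 0; have := h0 1; have := h0 2
      apply div_nonneg _ (norm_nonneg _)
      apply mul_nonneg (mul_nonneg (by linarith) (by linarith)) (by linarith)
    rw [integral_eq_lintegral_of_nonneg_ae
      ((ae_restrict_iff' measurableSet_symBox).2 (ae_of_all _ hφ_nonneg))
      hφ_meas.aestronglyMeasurable]
    congr 1
    have hcongr : ∫⁻ r in symBox, ENNReal.ofReal ((1 - |r 0|) * (1 - |r 1|) * (1 - |r 2|) / ‖r‖)
        = ∫⁻ r in symBox, (∏ i, ENNReal.ofReal (1 - |r i|)) * ENNReal.ofReal ‖r‖⁻¹ := by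
      refine setLIntegral_congr_fun measurableSet_symBox (fun r hr => ?_)
      have h0 : ∀ i, (0:ℝ) ≤ 1 - |r i| := by
        intro i
        have := abs_le.2 ⟨(hr i).1, (hr i).2⟩
        linarith
      rw [div_eq_mul_inv,
        ENNReal.ofReal_mul (mul_nonneg (mul_nonneg (h0 0) (h0 1)) (h0 2)),
        ENNReal.ofReal_mul (mul_nonneg (h0 0) (h0 1)),
        ENNReal.ofReal_mul (h0 0), Fin.prod_univ_three]
    rw [hcongr]
    -- extend to the whole space
    rw [← lintegral_indicator measurableSet_symBox]
    apply lintegral_congr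
    intro r
    rw [Set.indicator_apply]
    by_cases hr : r ∈ symBox
    · rw [if_pos hr]
    · rw [if_neg hr]
      have : ∃ i, 1 < |r i| := by
        by_contra hcon
        push_neg at hcon
        exact hr fun i => Set.mem_Icc.2 (abs_le.1 (hcon i))
      obtain ⟨i, hi⟩ := this
      have : ENNReal.ofReal (1 - |r i|) = 0 := by
        rw [ENNReal.ofReal_eq_zero]; linarith
      rw [Finset.prod_eq_zero (Finset.mem_univ i) this, zero_mul]
  rw [step1, step2, step3]

end Aux
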